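/- For every integer t ≥ 1, d_Q(t) ≤ d_K(t−1) and d_K(t) ≤ d_Q(t−1), where d_Q(t) := max_{g∈G*} ‖Q^t(g,·) − π_Q‖_TV and d_K(t) := max_{x∈X} ‖K^t(x,·) − π_K‖_TV. -/

import Mathlib

open Finset

variable (G X : Type) [Group G] [Fintype G] [DecidableEq G]
  [Fintype X] [DecidableEq X] [Nonempty X] [MulAction G X]

noncomputable section

/-- The fixed-point set `X_g = {x ∈ X : g • x = x}` of a group element. -/
def fixedPts (g : G) : Finset X := Finset.univ.filter fun x => g • x = x

/-- The stabilizer `G_x = {g ∈ G : g • x = x}` of a point, as a finset. -/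
def stab (x : X) : Finset G := Finset.univ.filter fun g => g • x = x

/-- `G* = {g ∈ G : X_g ≠ ∅}`. -/
def Gstar : Finset G := Finset.univ.filter fun g => (fixedPts G X g).Nonempty

/-- The dual Burnside kernel `Q(g,h) = ∑_{x ∈ X_g ∩ X_h} 1/(|X_g|·|G_x|)`. -/
def Q (g h : G) : ℝ :=
  ∑ x ∈ fixedPts G X g ∩ fixedPts G X h,
    1 / (((fixedPts G X g).card : ℝ) * ((stab G X x).card : ℝ))

/-- The primal Burnside kernel `K(x,y) = ∑_{g ∈ G_x ∩ G_y} 1/(|G_x|·|X_g|)`. -/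
def K (x y : X) : ℝ :=
  ∑ g ∈ stab G X x ∩ stab G X y,
    1 / (((stab G X x).card : ℝ) * ((fixedPts G X g).card : ℝ))

/-- The forward leg `A(g,x) = 1_{x ∈ X_g}/|X_g|`. -/
def A (g : G) (x : X) : ℝ :=
  if x ∈ fixedPts G X g then 1 / ((fixedPts G X g).card : ℝ) else 0

/-- The backward leg `B(x,h) = 1_{h ∈ G_x}/|G_x|`. -/
def B (x : X) (h : G) : ℝ :=
  if h ∈ stab G X x then 1 / ((stab G X x).card : ℝ) else 0


/-- `z = |X/G|`, the number of `G`-orbits on `X`. -/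
def numOrbits : ℕ := Nat.card (Quotient (MulAction.orbitRel G X))

/-- The dual stationary law `π_Q(g) = |X_g| / (z·|G|)`. -/
def piQ (g : G) : ℝ :=
  ((fixedPts G X g).card : ℝ) / ((numOrbits G X : ℝ) * (Fintype.card G : ℝ))

/-- The primal stationary law `π_K(x) = |G_x| / (z·|G|)`. -/
def piK (x : X) : ℝ :=
  ((stab G X x).card : ℝ) / ((numOrbits G X : ℝ) * (Fintype.card G : ℝ))

/-- The dual kernel as a matrix indexed by `G*`. -/
def Qmat : Matrix (Gstar G X) (Gstar G X) ℝ := fun g h => Q G X g.1 h.1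

/-- The primal kernel as a matrix indexed by `X`. -/
def Kmat : Matrix X X ℝ := fun x y => K G X x y

/-- Total variation distance of `Q^t(g,·)` from `π_Q`. -/
def tvQ (t : ℕ) (g : Gstar G X) : ℝ :=
  (1 / 2) * ∑ h : Gstar G X, |(Qmat G X ^ t) g h - piQ G X h.1|

/-- Total variation distance of `K^t(x,·)` from `π_K`. -/
def tvK (t : ℕ) (x : X) : ℝ :=
  (1 / 2) * ∑ y : X, |(Kmat G X ^ t) x y - piK G X y|

/-- Worst-case total variation distance for the dual chain: `d_Q(t) = max_{g∈G*} tvQ t g`. -/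
def dQ (t : ℕ) : ℝ := ⨆ g : Gstar G X, tvQ G X t g

/-- Worst-case total variation distance for the primal chain: `d_K(t) = max_{x∈X} tvK t x`. -/
def dK (t : ℕ) : ℝ := ⨆ x : X, tvK G X t x

set_option linter.unusedSectionVars false

lemma one_mem_stab (x : X) : (1:G) ∈ stab G X x := by simp [stab]

lemma stab_nonempty (x : X) : (stab G X x).Nonempty := ⟨1, one_mem_stab G X x⟩

lemma mem_Gstar_of_mem_stab {g : G} {x : X} (h : g ∈ stab G X x) : g ∈ Gstar G X := by
  exact Finset.mem_filter.mpr ⟨Finset.mem_univ _,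
    ⟨x, Finset.mem_filter.mpr ⟨Finset.mem_univ _, (Finset.mem_filter.mp h).2⟩⟩⟩

lemma Gstar_nonempty : Nonempty ↥(Gstar G X) :=
  ⟨⟨1, mem_Gstar_of_mem_stab G X (one_mem_stab G X (Classical.arbitrary X))⟩⟩

lemma A_nonneg (g : G) (x : X) : 0 ≤ A G X g x := by
  rw [A]; split <;> positivity

lemma B_nonneg (x : X) (h : G) : 0 ≤ B G X x h := by
  rw [B]; split <;> positivity

lemma sum_A {g : G} (hg : g ∈ Gstar G X) : ∑ x : X, A G X g x = 1 := by
  have hne : (fixedPts G X g).Nonempty := by simpa [Gstar] using hg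
  have hc : ((fixedPts G X g).card : ℝ) ≠ 0 := by exact_mod_cast hne.card_pos.ne'
  simp only [A]
  rw [Finset.sum_ite_mem, Finset.univ_inter, Finset.sum_const, nsmul_eq_mul]
  field_simp

lemma B_eq_zero {x : X} {h : G} (hh : h ∉ Gstar G X) : B G X x h = 0 := by
  rw [B, if_neg]; intro hm; exact hh (mem_Gstar_of_mem_stab G X hm)

lemma sum_B (x : X) : ∑ h : ↥(Gstar G X), B G X x h.1 = 1 := by
  have hc : ((stab G X x).card : ℝ) ≠ 0 := by
    exact_mod_cast (stab_nonempty G X x).card_pos.ne'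
  rw [Finset.sum_coe_sort (Gstar G X) (fun h => B G X x h),
      Finset.sum_subset (Finset.subset_univ _) (fun h _ hh => B_eq_zero G X hh)]
  simp only [B]
  rw [Finset.sum_ite_mem, Finset.univ_inter, Finset.sum_const, nsmul_eq_mul]
  field_simp

lemma mem_fixedPts_iff (g : G) (x : X) : x ∈ fixedPts G X g ↔ g ∈ stab G X x := by
  simp [fixedPts, stab]

lemma Q_eq (g h : G) : Q G X g h = ∑ x : X, A G X g x * B G X x h := by
  rw [Q, ← Finset.univ_inter (fixedPts G X g ∩ fixedPts G X h), ← Finset.sum_ite_mem]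
  refine Finset.sum_congr rfl fun x _ => ?_
  rw [A, B]
  by_cases h1 : x ∈ fixedPts G X g
  · by_cases h2 : x ∈ fixedPts G X h
    · rw [if_pos (Finset.mem_inter.mpr ⟨h1, h2⟩), if_pos h1,
        if_pos ((mem_fixedPts_iff G X h x).mp h2), div_mul_div_comm, one_mul]
    · rw [if_neg (fun hm => h2 (Finset.mem_inter.mp hm).2), if_pos h1,
        if_neg (fun hm => h2 ((mem_fixedPts_iff G X h x).mpr hm)), mul_zero]
  · rw [if_neg (fun hm => h1 (Finset.mem_inter.mp hm).1), if_neg h1, zero_mul]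

lemma K_eq (x y : X) : K G X x y = ∑ g : ↥(Gstar G X), B G X x g.1 * A G X g.1 y := by
  rw [Finset.sum_coe_sort (Gstar G X) (fun g => B G X x g * A G X g y),
      Finset.sum_subset (Finset.subset_univ _)
        (fun g _ hg => by rw [B_eq_zero G X hg, zero_mul]),
      K, ← Finset.univ_inter (stab G X x ∩ stab G X y), ← Finset.sum_ite_mem]
  refine Finset.sum_congr rfl fun g _ => ?_
  rw [A, B]
  by_cases h1 : g ∈ stab G X x
  · by_cases h2 : g ∈ stab G X y
    · rw [if_pos (Finset.mem_inter.mpr ⟨h1, h2⟩), if_pos h1,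
        if_pos ((mem_fixedPts_iff G X g y).mpr h2), div_mul_div_comm, one_mul]
    · rw [if_neg (fun hm => h2 (Finset.mem_inter.mp hm).2), if_pos h1,
        if_neg (fun hm => h2 ((mem_fixedPts_iff G X g y).mp hm)), mul_zero]
  · rw [if_neg (fun hm => h1 (Finset.mem_inter.mp hm).1), if_neg h1, zero_mul]

/-- Forward leg as a rectangular matrix. -/
def Am : Matrix ↥(Gstar G X) X ℝ := fun g x => A G X g.1 x
/-- Backward leg as a rectangular matrix. -/
def Bm : Matrix X ↥(Gstar G X) ℝ := fun x h => B G X x h.1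

lemma Qmat_eq : Qmat G X = Am G X * Bm G X := by
  ext g h
  rw [Matrix.mul_apply]
  exact Q_eq G X g.1 h.1

lemma Kmat_eq : Kmat G X = Bm G X * Am G X := by
  ext x y
  rw [Matrix.mul_apply]
  exact K_eq G X x y

lemma pow_factor {m n : Type*} [Fintype m] [Fintype n] [DecidableEq m] [DecidableEq n]
    (P : Matrix m n ℝ) (R : Matrix n m ℝ) (s : ℕ) :
    (P * R) ^ (s + 1) = P * (R * P) ^ s * R := by
  induction s with
  | zero => simp [Matrix.mul_one]
  | succ n ih =>
    rw [pow_succ, ih, pow_succ]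
    simp only [Matrix.mul_assoc]

lemma tv_generic {ι κ σ : Type*} [Fintype ι] [Fintype κ] [Fintype σ]
    (a : κ → ℝ) (P : κ → σ → ℝ) (b : σ → ι → ℝ) (ps : σ → ℝ) (pi' : ι → ℝ) (d : ℝ)
    (ha : ∀ k, 0 ≤ a k) (ha1 : ∑ k, a k = 1)
    (hb : ∀ s i, 0 ≤ b s i) (hb1 : ∀ s, ∑ i, b s i = 1)
    (hpi : ∀ i, ∑ s, ps s * b s i = pi' i)
    (hd : ∀ k, (1/2) * ∑ s, |P k s - ps s| ≤ d) :
    (1/2) * ∑ i, |(∑ s, (∑ k, a k * P k s) * b s i) - pi' i| ≤ d := by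
  set m : σ → ℝ := fun s => ∑ k, a k * P k s with hm
  have step1 : ∀ i, |(∑ s, m s * b s i) - pi' i| ≤ ∑ s, |m s - ps s| * b s i := by
    intro i
    rw [← hpi i, ← Finset.sum_sub_distrib]
    calc |∑ s, (m s * b s i - ps s * b s i)| ≤ ∑ s, |m s * b s i - ps s * b s i| :=
          Finset.abs_sum_le_sum_abs _ _
      _ = ∑ s, |m s - ps s| * b s i := by
          refine Finset.sum_congr rfl fun s _ => ?_
          rw [← sub_mul, abs_mul, abs_of_nonneg (hb s i)]
  have step2 : ∑ i, (∑ s, |m s - ps s| * b s i) = ∑ s, |m s - ps s| := by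
    rw [Finset.sum_comm]
    refine Finset.sum_congr rfl fun s _ => ?_
    rw [← Finset.mul_sum, hb1 s, mul_one]
  have step3 : ∀ s, |m s - ps s| ≤ ∑ k, a k * |P k s - ps s| := by
    intro s
    have hms : m s - ps s = ∑ k, a k * (P k s - ps s) := by
      simp only [mul_sub]
      rw [Finset.sum_sub_distrib, ← Finset.sum_mul, ha1, one_mul, hm]
    rw [hms]
    calc |∑ k, a k * (P k s - ps s)| ≤ ∑ k, |a k * (P k s - ps s)| :=
          Finset.abs_sum_le_sum_abs _ _
      _ = ∑ k, a k * |P k s - ps s| := by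
          refine Finset.sum_congr rfl fun k _ => ?_
          rw [abs_mul, abs_of_nonneg (ha k)]
  calc (1/2) * ∑ i, |(∑ s, m s * b s i) - pi' i|
      ≤ (1/2) * ∑ i, ∑ s, |m s - ps s| * b s i := by
        gcongr with i _
        exact step1 i
    _ = (1/2) * ∑ s, |m s - ps s| := by rw [step2]
    _ ≤ (1/2) * ∑ s, ∑ k, a k * |P k s - ps s| := by
        gcongr with s _
        exact step3 s
    _ = ∑ k, a k * ((1/2) * ∑ s, |P k s - ps s|) := by
        rw [Finset.sum_comm, Finset.mul_sum]
        refine Finset.sum_congr rfl fun k _ => ?_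
        rw [← Finset.mul_sum]; ring
    _ ≤ ∑ k, a k * d := Finset.sum_le_sum fun k _ =>
        mul_le_mul_of_nonneg_left (hd k) (ha k)
    _ = d := by rw [← Finset.sum_mul, ha1, one_mul]

lemma cancel_aux (a c : ℝ) (ha : a ≠ 0) : a / (c * a) = 1 / c := by
  rw [mul_comm, ← div_div, div_self ha]

lemma piQ_station (g : ↥(Gstar G X)) :
    ∑ y : X, piK G X y * B G X y g.1 = piQ G X g.1 := by
  have key : ∀ y : X, piK G X y * B G X y g.1 =
      if y ∈ fixedPts G X g.1 then
        1 / ((numOrbits G X : ℝ) * (Fintype.card G : ℝ)) else 0 := by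
    intro y
    have hc : ((stab G X y).card : ℝ) ≠ 0 := by
      exact_mod_cast (stab_nonempty G X y).card_pos.ne'
    rw [piK, B]
    by_cases h : g.1 ∈ stab G X y
    · rw [if_pos h, if_pos ((mem_fixedPts_iff G X g.1 y).mpr h)]
      field_simp
    · rw [if_neg h, if_neg (fun hy => h ((mem_fixedPts_iff G X g.1 y).mp hy)), mul_zero]
  rw [Finset.sum_congr rfl (fun y _ => key y), Finset.sum_ite_mem, Finset.univ_inter,
      Finset.sum_const, nsmul_eq_mul, mul_one_div, piQ]

lemma piK_station (y : X) :
    ∑ g : ↥(Gstar G X), piQ G X g.1 * A G X g.1 y = piK G X y := by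
  rw [Finset.sum_coe_sort (Gstar G X) (fun g => piQ G X g * A G X g y),
      Finset.sum_subset (Finset.subset_univ _) (fun g _ hg => by
        have hz : (fixedPts G X g).card = 0 := by
          rw [Finset.card_eq_zero, ← Finset.not_nonempty_iff_eq_empty]
          simpa [Gstar] using hg
        simp [piQ, hz])]
  have key : ∀ g : G, piQ G X g * A G X g y =
      if g ∈ stab G X y then
        1 / ((numOrbits G X : ℝ) * (Fintype.card G : ℝ)) else 0 := by
    intro g
    rw [piQ, A]
    by_cases h : g ∈ stab G X y
    · have hy : y ∈ fixedPts G X g := (mem_fixedPts_iff G X g y).mpr h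
      have hc : ((fixedPts G X g).card : ℝ) ≠ 0 := by
        exact_mod_cast (Finset.card_pos.mpr ⟨y, hy⟩).ne'
      rw [if_pos h, if_pos hy]
      field_simp
    · rw [if_neg h, if_neg (fun hy => h ((mem_fixedPts_iff G X g y).mp hy)), mul_zero]
  rw [Finset.sum_congr rfl (fun g _ => key g), Finset.sum_ite_mem, Finset.univ_inter,
      Finset.sum_const, nsmul_eq_mul, mul_one_div, piK]


lemma Qpow_entry (s : ℕ) (g h : ↥(Gstar G X)) :
    (Qmat G X ^ (s+1)) g h =
      ∑ y : X, (∑ x : X, A G X g.1 x * (Kmat G X ^ s) x y) * B G X y h.1 := by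
  rw [Qmat_eq, pow_factor, ← Kmat_eq, Matrix.mul_apply]
  refine Finset.sum_congr rfl fun y _ => ?_
  rw [Matrix.mul_apply]
  rfl

lemma Kpow_entry (s : ℕ) (x y : X) :
    (Kmat G X ^ (s+1)) x y =
      ∑ g : ↥(Gstar G X), (∑ h : ↥(Gstar G X), B G X x h.1 * (Qmat G X ^ s) h g)
        * A G X g.1 y := by
  rw [Kmat_eq, pow_factor, ← Qmat_eq, Matrix.mul_apply]
  refine Finset.sum_congr rfl fun g _ => ?_
  rw [Matrix.mul_apply]
  rfl

lemma tvK_le_dK (s : ℕ) (x : X) : tvK G X s x ≤ dK G X s :=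
  le_ciSup (f := tvK G X s) (Set.Finite.bddAbove (Set.finite_range _)) x

lemma tvQ_le_dQ (s : ℕ) (g : ↥(Gstar G X)) : tvQ G X s g ≤ dQ G X s :=
  le_ciSup (f := tvQ G X s) (Set.Finite.bddAbove (Set.finite_range _)) g

set_option maxHeartbeats 1000000

/-- One-step TV comparison: `d_Q(t) ≤ d_K(t−1)` and `d_K(t) ≤ d_Q(t−1)` for every `t ≥ 1`. -/
theorem tv_one_step_comparison (t : ℕ) (ht : 1 ≤ t) :
    dQ G X t ≤ dK G X (t - 1) ∧ dK G X t ≤ dQ G X (t - 1) := by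
  haveI := Gstar_nonempty G X
  obtain ⟨s, rfl⟩ : ∃ s, t = s + 1 := ⟨t - 1, (Nat.succ_pred_eq_of_pos ht).symm⟩
  simp only [Nat.add_sub_cancel]
  constructor
  · refine ciSup_le fun g => ?_
    have heq : tvQ G X (s+1) g = (1/2) * ∑ h : ↥(Gstar G X),
        |(∑ y : X, (∑ x : X, A G X g.1 x * (Kmat G X ^ s) x y) * B G X y h.1)
          - piQ G X h.1| := by
      unfold tvQ
      simp only [Qpow_entry]
    rw [heq]
    exact tv_generic (ι := ↥(Gstar G X)) (κ := X) (σ := X)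
      (A G X g.1) (fun x y => (Kmat G X ^ s) x y)
      (fun y h => B G X y h.1) (piK G X) (fun h => piQ G X h.1) (dK G X s)
      (A_nonneg G X g.1) (sum_A G X g.2) (fun y h => B_nonneg G X y h.1)
      (sum_B G X) (piQ_station G X) (fun x => tvK_le_dK G X s x)
  · refine ciSup_le fun x => ?_
    have heq : tvK G X (s+1) x = (1/2) * ∑ y : X,
        |(∑ g : ↥(Gstar G X), (∑ h : ↥(Gstar G X), B G X x h.1 * (Qmat G X ^ s) h g)
          * A G X g.1 y) - piK G X y| := by
      unfold tvK
      simp only [Kpow_entry]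
    rw [heq]
    exact tv_generic (ι := X) (κ := ↥(Gstar G X)) (σ := ↥(Gstar G X))
      (fun h : ↥(Gstar G X) => B G X x h.1)
      (fun h g => (Qmat G X ^ s) h g) (fun g y => A G X g.1 y)
      (fun h => piQ G X h.1) (piK G X) (dQ G X s)
      (fun h => B_nonneg G X x h.1) (sum_B G X x)
      (fun g y => A_nonneg G X g.1 y) (fun g => sum_A G X g.2)
      (piK_station G X) (fun h => tvQ_le_dQ G X s h)

end
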